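/- Let Z be a good disjoint subfamily of a laminar matroid (L, c) with respect to an independent set X and element x ∈ X, such that height(Z) = max{c(A) : A ∈ Z} = 1. Then E(Z) = ⋃_{Z∈Z} Z is an (X, x)-exchangeable set, i.e., x ∈ E(Z) and X − x + y is independent for every y ∈ E(Z). -/

import Mathlib

/-- Setting: a laminar matroid on `E` given by a laminar family `L`
(containing all singletons with capacity 1, all capacities positive, and capacities monotone
under inclusion) and `c : L → ℕ`. Let `X` be independent, `x ∈ X`, and let `Z ⊆ L` be a
good disjoint subfamily of height 1: all capacities of members of `Z` equal 1, some
`Z₀ ∈ Z` contains `x` with `X ∩ (E(Z) \ Z₀) = ∅`, and no tight set contains a member of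
`Z`. Then `E(Z) = ⋃₀ Z` is an `(X, x)`-exchangeable set: `x ∈ E(Z)` and `X − x + y` is
independent for every `y ∈ E(Z)`. -/
theorem stmt_13 {E : Type*} (L : Set (Set E))
    (hL : ∀ A ∈ L, ∀ B ∈ L, (A ∩ B).Nonempty → A ⊆ B ∨ B ⊆ A)
    (c : Set E → ℕ)
    (hsing : ∀ e : E, ({e} : Set E) ∈ L ∧ c {e} = 1)
    (hpos : ∀ A ∈ L, 0 < c A)
    (hmono : ∀ A ∈ L, ∀ B ∈ L, A ⊆ B → c A ≤ c B)
    (X : Set E) (hXfin : X.Finite)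
    (hX : ∀ A ∈ L, (X ∩ A).ncard ≤ c A)
    (x : E) (hx : x ∈ X)
    (Z : Set (Set E)) (hZL : Z ⊆ L) (hZdisj : Z.Pairwise Disjoint)
    (hheight : ∀ A ∈ Z, c A = 1)
    (hgood1 : ∃ Z0 ∈ Z, x ∈ Z0 ∧ X ∩ (⋃₀ Z \ Z0) = ∅)
    (hgood2 : ∀ A ∈ L, ((X \ {x}) ∩ A).ncard = c A → ∀ B ∈ Z, ¬ B ⊆ A) :
    x ∈ ⋃₀ Z ∧ ∀ y ∈ ⋃₀ Z, ∀ A ∈ L, (((X \ {x}) ∪ {y}) ∩ A).ncard ≤ c A := by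
  obtain ⟨Z0, hZ0Z, hxZ0, hXZ0⟩ := hgood1
  refine ⟨⟨Z0, hZ0Z, hxZ0⟩, ?_⟩
  intro y hy A hA
  obtain ⟨B, hBZ, hyB⟩ := hy
  have hfin : ((X \ {x}) ∩ A).Finite := (hXfin.diff (t := {x})).inter_of_left _
  have hle : ((X \ {x}) ∩ A).ncard ≤ c A :=
    le_trans (Set.ncard_le_ncard
      (Set.inter_subset_inter_left _ Set.diff_subset) (hXfin.inter_of_left _)) (hX A hA)
  by_cases hyA : y ∈ A
  · have hsub : ((X \ {x}) ∪ {y}) ∩ A ⊆ insert y ((X \ {x}) ∩ A) := by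
      rintro z ⟨hz1 | hz1, hz2⟩
      · exact Or.inr ⟨hz1, hz2⟩
      · exact Or.inl hz1
    have hlt : ((X \ {x}) ∩ A).ncard < c A := by
      rcases lt_or_eq_of_le hle with h | h
      · exact h
      exfalso
      have hnsub := hgood2 A hA h B hBZ
      have hAB : A ⊆ B := by
        rcases hL A hA B (hZL hBZ) ⟨y, hyA, hyB⟩ with h' | h'
        · exact h'
        · exact absurd h' hnsub
      have hcA : c A = 1 := by
        have h1 := hmono A hA B (hZL hBZ) hAB
        have h2 := hheight B hBZ
        have h3 := hpos A hA
        omega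
      obtain ⟨z, hz⟩ := Set.ncard_eq_one.mp (h.trans hcA)
      have hzmem : z ∈ (X \ {x}) ∩ A := hz ▸ rfl
      obtain ⟨⟨hzX, hzx⟩, hzA⟩ := hzmem
      have hzB : z ∈ B := hAB hzA
      by_cases hBZ0 : B = Z0
      · subst hBZ0
        have h2 : 1 < (X ∩ B).ncard := by
          rw [Set.one_lt_ncard_iff (hXfin.inter_of_left _)]
          exact ⟨x, z, ⟨hx, hxZ0⟩, ⟨hzX, hzB⟩, fun h => hzx (by simp [← h])⟩
        have := hX B (hZL hBZ)
        have := hheight B hBZ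
        omega
      · have hzZ0 : z ∉ Z0 := fun hzZ0 =>
          Set.disjoint_left.mp (hZdisj hBZ hZ0Z hBZ0) hzB hzZ0
        have : z ∈ X ∩ (⋃₀ Z \ Z0) := ⟨hzX, ⟨B, hBZ, hzB⟩, hzZ0⟩
        rw [hXZ0] at this
        exact this
    calc (((X \ {x}) ∪ {y}) ∩ A).ncard ≤ (insert y ((X \ {x}) ∩ A)).ncard :=
          Set.ncard_le_ncard hsub (hfin.insert y)
      _ ≤ ((X \ {x}) ∩ A).ncard + 1 := Set.ncard_insert_le _ _
      _ ≤ c A := hlt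
  · have hsub : ((X \ {x}) ∪ {y}) ∩ A ⊆ (X \ {x}) ∩ A := by
      rintro z ⟨hz1 | hz1, hz2⟩
      · exact ⟨hz1, hz2⟩
      · exact absurd (hz1 ▸ hz2) hyA
    exact le_trans (Set.ncard_le_ncard hsub hfin) hle
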